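/- Let A be a symmetric positive definite real 3×3 matrix, u ∈ ℝ³ a unit vector, γ, k_R, k_ω, k_θ > 0, and J a symmetric positive definite 3×3 matrix. Let R : ℝ → ℝ^{3×3}, θ : ℝ → ℝ, ω : ℝ → ℝ³, t₀ ∈ ℝ, and let Σ be a 3×3 matrix with Σᵀ = −Σ. Write R₀ := R(t₀), θ₀ := θ(t₀), ω₀ := ω(t₀), and ψ₀ := ψ(A·T(R₀,θ₀)). Suppose at t₀: R has derivative R₀·ω₀^×; θ has derivative −k_θ(γθ₀ + 2uᵀψ₀); and ω has derivative J⁻¹(Σω₀ − 2k_R·Ra(θ₀,u)ψ₀ − k_ω ω₀). Then the map t ↦ k_R·U(R(t),θ(t)) + (1/2)ω(t)ᵀJω(t) has derivative −k_ω‖ω₀‖² − k_R k_θ (γθ₀ + 2uᵀψ₀)² at t₀. -/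

import Mathlib

open Matrix

noncomputable section

abbrev M3 : Type := Matrix (Fin 3) (Fin 3) ℝ
abbrev V3 : Type := Fin 3 → ℝ

/-- skew-symmetric matrix associated to `x`: `skew x *ᵥ y = x ×₃ y`. -/
def skew (x : V3) : M3 :=
  !![0, -x 2, x 1; x 2, 0, -x 0; -x 1, x 0, 0]

/-- the special orthogonal group SO(3) as a subset of 3×3 matrices -/
def SO3 : Set M3 := {R | Rᵀ * R = 1 ∧ R.det = 1}

/-- Rodrigues formula -/
def Ra (θ : ℝ) (u : V3) : M3 :=
  1 + Real.sin θ • skew u + (1 - Real.cos θ) • (skew u * skew u)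

/-- `psi M = vec (P_a M)`, the vector part of the antisymmetric projection -/
def psi (M : M3) : V3 :=
  ![(M 2 1 - M 1 2) / 2, (M 0 2 - M 2 0) / 2, (M 1 0 - M 0 1) / 2]

/-- the angular-warping transformation `T(R,θ) = R · Ra(θ,u)` -/
def Tmap (u : V3) (R : M3) (θ : ℝ) : M3 := R * Ra θ u

/-- the potential function `U(R,θ)` on SO(3) × ℝ -/
def Ufun (A : M3) (u : V3) (γ : ℝ) (R : M3) (θ : ℝ) : ℝ :=
  (A * (1 - Tmap u R θ)).trace + γ / 2 * θ ^ 2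

/-- Euclidean norm on ℝ³ -/
def enorm3 (x : V3) : ℝ := Real.sqrt (x ⬝ᵥ x)

/-- Frobenius norm of a 3×3 matrix -/
def fnorm (M : M3) : ℝ := Real.sqrt ((Mᵀ * M).trace)

/-- `E(M) := (tr(M) I − Mᵀ)/2` -/
def Emap (M : M3) : M3 := (2⁻¹ : ℝ) • (M.trace • (1 : M3) - Mᵀ)

/-- `D_R(R,θ)` from Lemma 2 -/
def DR (A : M3) (u : V3) (R : M3) (θ : ℝ) : M3 :=
  Ra θ u * Emap (A * Tmap u R θ) * (Ra θ u)ᵀ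

/-- `D_θ(R,θ)` from Lemma 2 -/
def Dθ (A : M3) (u : V3) (R : M3) (θ : ℝ) : V3 :=
  (Ra θ u * Emap (A * Tmap u R θ)) *ᵥ u - skew (Ra θ u *ᵥ psi (A * Tmap u R θ)) *ᵥ u

/-- Δ(v,u) from the construction of the synergistic gap -/
def Delta (A : M3) (v u : V3) : ℝ :=
  u ⬝ᵥ ((A.trace • (1 : M3) - A - (2 * (v ⬝ᵥ A *ᵥ v)) • ((1 : M3) - vecMulVec v v)) *ᵥ u)

/-- `v` is a unit eigenvector of `A` -/
def IsUnitEigen (A : M3) (v : V3) : Prop :=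
  v ⬝ᵥ v = 1 ∧ ∃ lam : ℝ, A *ᵥ v = lam • v

/-- Ā := (tr(A) I − A)/2 -/
def Abar (A : M3) : M3 := (2⁻¹ : ℝ) • (A.trace • (1 : M3) - A)

/-- `lam` is an eigenvalue of `M` -/
def IsEigen (M : M3) (lam : ℝ) : Prop := ∃ w : V3, w ≠ 0 ∧ M *ᵥ w = lam • w
attribute [local instance] Matrix.normedAddCommGroup Matrix.normedSpace

lemma hasDerivAt_entry {F : ℝ → M3} {F' : M3} {t : ℝ}
    (h : HasDerivAt F F' t) (i j : Fin 3) :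
    HasDerivAt (fun s => F s i j) (F' i j) t :=
  hasDerivAt_pi.mp (hasDerivAt_pi.mp h i) j

lemma hasDerivAt_entryV {F : ℝ → V3} {F' : V3} {t : ℝ}
    (h : HasDerivAt F F' t) (i : Fin 3) :
    HasDerivAt (fun s => F s i) (F' i) t :=
  hasDerivAt_pi.mp h i

lemma HasDerivAt.matmul {M N : ℝ → M3} {M' N' : M3} {t : ℝ}
    (hM : HasDerivAt M M' t) (hN : HasDerivAt N N' t) :
    HasDerivAt (fun s => M s * N s) (M' * N t + M t * N') t := by
  apply hasDerivAt_pi.mpr; intro i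
  apply hasDerivAt_pi.mpr; intro j
  simp only [Matrix.add_apply, Matrix.mul_apply, ← Finset.sum_add_distrib]
  exact HasDerivAt.fun_sum fun k _ => (hasDerivAt_entry hM i k).mul (hasDerivAt_entry hN k j)

lemma HasDerivAt.mtrace {M : ℝ → M3} {M' : M3} {t : ℝ} (h : HasDerivAt M M' t) :
    HasDerivAt (fun s => (M s).trace) M'.trace t := by
  simp only [Matrix.trace_fin_three]
  exact ((hasDerivAt_entry h 0 0).add (hasDerivAt_entry h 1 1)).add (hasDerivAt_entry h 2 2)

lemma HasDerivAt.mulVecConst {J : M3} {F : ℝ → V3} {F' : V3} {t : ℝ}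
    (h : HasDerivAt F F' t) :
    HasDerivAt (fun s => J *ᵥ F s) (J *ᵥ F') t := by
  apply hasDerivAt_pi.mpr; intro i
  simp only [Matrix.mulVec, dotProduct]
  exact HasDerivAt.fun_sum fun k _ => (hasDerivAt_entryV h k).const_mul (J i k)

lemma HasDerivAt.dotp {F G : ℝ → V3} {F' G' : V3} {t : ℝ}
    (hF : HasDerivAt F F' t) (hG : HasDerivAt G G' t) :
    HasDerivAt (fun s => F s ⬝ᵥ G s) (F' ⬝ᵥ G t + F t ⬝ᵥ G') t := by
  simp only [dotProduct, ← Finset.sum_add_distrib]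
  exact HasDerivAt.fun_sum fun k _ => (hasDerivAt_entryV hF k).mul (hasDerivAt_entryV hG k)
lemma key1 (B : M3) (w u : V3) (θ : ℝ) (hu : u ⬝ᵥ u = 1) :
    (B * skew w * Ra θ u).trace = -2 * (w ⬝ᵥ Ra θ u *ᵥ psi (B * Ra θ u)) := by
  have hu' : u 0 ^ 2 + u 1 ^ 2 + u 2 ^ 2 = 1 := by
    simpa [dotProduct, Fin.sum_univ_three, sq] using hu
  have hsc : Real.sin θ ^ 2 + Real.cos θ ^ 2 = 1 := Real.sin_sq_add_cos_sq θ
  simp only [Ra, skew, psi, Matrix.trace_fin_three, Matrix.mul_apply, Matrix.mulVec,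
    dotProduct, Fin.sum_univ_three, Matrix.add_apply, Matrix.smul_apply, Matrix.one_apply,
    Matrix.cons_val_zero, Matrix.cons_val_one, Matrix.cons_val_two,
    Matrix.head_cons, Matrix.empty_val', Matrix.cons_val_fin_one, Matrix.head_fin_const,
    smul_eq_mul, Matrix.vecTail, Matrix.vecHead, Function.comp, Matrix.cons_val, Matrix.of_apply]
  norm_num [Fin.ext_iff]
  simp only [Matrix.cons_val]
  linear_combination ((w 1)*(B 2 0) - 1*(w 0)*(B 2 1) - 1*(Real.cos θ)^2*(w 1)*(B 2 0) + (Real.cos θ)^2*(w 0)*(B 2 1) - 1*(Real.sin θ)^2*(w 1)*(B 2 0) + (Real.sin θ)^2*(w 0)*(B 2 1) - 1*(u 2)^2*(w 1)*(B 2 0) + (u 2)^2*(w 0)*(B 2 1) + 2*(u 2)^2*(Real.cos θ)*(w 1)*(B 2 0) - 2*(u 2)^2*(Real.cos θ)*(w 0)*(B 2 1) - 1*(u 2)^2*(Real.cos θ)^2*(w 1)*(B 2 0) + (u 2)^2*(Real.cos θ)^2*(w 0)*(B 2 1) + (u 1)*(u 2)*(w 2)*(B 2 0) - 1*(u 1)*(u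 2)*(w 1)*(B 1 0) - 1*(u 1)*(u 2)*(w 0)*(B 2 2) + (u 1)*(u 2)*(w 0)*(B 1 1) - 2*(u 1)*(u 2)*(Real.cos θ)*(w 2)*(B 2 0) + 2*(u 1)*(u 2)*(Real.cos θ)*(w 1)*(B 1 0) + 2*(u 1)*(u 2)*(Real.cos θ)*(w 0)*(B 2 2) - 2*(u 1)*(u 2)*(Real.cos θ)*(w 0)*(B 1 1) + (u 1)*(u 2)*(Real.cos θ)^2*(w 2)*(B 2 0) - 1*(u 1)*(u 2)*(Real.cos θ)^2*(w 1)*(B 1 0) - 1*(u 1)*(u 2)*(Real.cos θ)^2*(w 0)*(B 2 2) + (u 1)*(u 2)*(Real.cos θ)^2*(w 0)*(B 1 1) + (u 1)^2*(w 2)*(B 1 0) - 1*(u 1)^2*(w 0)*(B 1 2) - 2*(u 1)^2*(Real.cos θ)*(w 2)*(B 1 0) + 2*(u 1)^2*(Real.cos θ)*(w 0)*(B 1 2) + (u 1)^2*(Real.cos θ)^2*(w 2)*(B 1 0) - 1*(u 1)^2*(Real.cos θ)^2*(w 0)*(B 1 2) - 1*(u 0)*(u 2)*(w 2)*(B 2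 1) + (u 0)*(u 2)*(w 1)*(B 2 2) - 1*(u 0)*(u 2)*(w 1)*(B 0 0) + (u 0)*(u 2)*(w 0)*(B 0 1) + 2*(u 0)*(u 2)*(Real.cos θ)*(w 2)*(B 2 1) - 2*(u 0)*(u 2)*(Real.cos θ)*(w 1)*(B 2 2) + 2*(u 0)*(u 2)*(Real.cos θ)*(w 1)*(B 0 0) - 2*(u 0)*(u 2)*(Real.cos θ)*(w 0)*(B 0 1) - 1*(u 0)*(u 2)*(Real.cos θ)^2*(w 2)*(B 2 1) + (u 0)*(u 2)*(Real.cos θ)^2*(w 1)*(B 2 2) - 1*(u 0)*(u 2)*(Real.cos θ)^2*(w 1)*(B 0 0) + (u 0)*(u 2)*(Real.cos θ)^2*(w 0)*(B 0 1) - 1*(u 0)*(u 1)*(w 2)*(B 1 1) + (u 0)*(u 1)*(w 2)*(B 0 0) + (u 0)*(u 1)*(w 1)*(B 1 2) - 1*(u 0)*(u 1)*(w 0)*(B 0 2) + 2*(u 0)*(u 1)*(Real.cos θ)*(w 2)*(B 1 1) - 2*(u 0)*(u 1)*(Real.cos θ)*(w 2)*(B 0 0) - 2*(u 0)*(u 1)*(Real.cos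 θ)*(w 1)*(B 1 2) + 2*(u 0)*(u 1)*(Real.cos θ)*(w 0)*(B 0 2) - 1*(u 0)*(u 1)*(Real.cos θ)^2*(w 2)*(B 1 1) + (u 0)*(u 1)*(Real.cos θ)^2*(w 2)*(B 0 0) + (u 0)*(u 1)*(Real.cos θ)^2*(w 1)*(B 1 2) - 1*(u 0)*(u 1)*(Real.cos θ)^2*(w 0)*(B 0 2) - 1*(u 0)^2*(w 2)*(B 0 1) + (u 0)^2*(w 1)*(B 0 2) + 2*(u 0)^2*(Real.cos θ)*(w 2)*(B 0 1) - 2*(u 0)^2*(Real.cos θ)*(w 1)*(B 0 2) - 1*(u 0)^2*(Real.cos θ)^2*(w 2)*(B 0 1) + (u 0)^2*(Real.cos θ)^2*(w 1)*(B 0 2)) * hu' + (-1*(w 1)*(B 2 0) + (w 0)*(B 2 1) + (u 1)*(u 2)*(w 2)*(B 2 0) - 1*(u 1)*(u 2)*(w 1)*(B 1 0) - 1*(u 1)*(u 2)*(w 0)*(B 2 2) + (u 1)*(u 2)*(w 0)*(B 1 1) + (u 1)^2*(w 2)*(B 1 0) + (u 1)^2*(w 1)*(B 2 0) - 1*(u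 1)^2*(w 0)*(B 2 1) - 1*(u 1)^2*(w 0)*(B 1 2) - 1*(u 0)*(u 2)*(w 2)*(B 2 1) + (u 0)*(u 2)*(w 1)*(B 2 2) - 1*(u 0)*(u 2)*(w 1)*(B 0 0) + (u 0)*(u 2)*(w 0)*(B 0 1) - 1*(u 0)*(u 1)*(w 2)*(B 1 1) + (u 0)*(u 1)*(w 2)*(B 0 0) + (u 0)*(u 1)*(w 1)*(B 1 2) - 1*(u 0)*(u 1)*(w 0)*(B 0 2) - 1*(u 0)^2*(w 2)*(B 0 1) + (u 0)^2*(w 1)*(B 2 0) + (u 0)^2*(w 1)*(B 0 2) - 1*(u 0)^2*(w 0)*(B 2 1)) * hsc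

lemma key2 (B : M3) (u : V3) (θ : ℝ) (hu : u ⬝ᵥ u = 1) :
    (B * (Real.cos θ • skew u + Real.sin θ • (skew u * skew u))).trace
      = -2 * (u ⬝ᵥ psi (B * Ra θ u)) := by
  have hu' : u 0 ^ 2 + u 1 ^ 2 + u 2 ^ 2 = 1 := by
    simpa [dotProduct, Fin.sum_univ_three, sq] using hu
  have hsc : Real.sin θ ^ 2 + Real.cos θ ^ 2 = 1 := Real.sin_sq_add_cos_sq θ
  simp only [Ra, skew, psi, Matrix.trace_fin_three, Matrix.mul_apply, Matrix.mulVec,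
    dotProduct, Fin.sum_univ_three, Matrix.add_apply, Matrix.smul_apply, Matrix.one_apply,
    Matrix.cons_val_zero, Matrix.cons_val_one, Matrix.cons_val_two,
    Matrix.head_cons, Matrix.empty_val', Matrix.cons_val_fin_one, Matrix.head_fin_const,
    smul_eq_mul, Matrix.vecTail, Matrix.vecHead, Function.comp, Matrix.cons_val, Matrix.of_apply]
  norm_num [Fin.ext_iff]
  simp only [Matrix.cons_val]
  linear_combination (-1*(u 2)*(B 1 0) + (u 2)*(B 0 1) + (u 2)*(Real.cos θ)*(B 1 0) - 1*(u 2)*(Real.cos θ)*(B 0 1) + (u 1)*(B 2 0) - 1*(u 1)*(B 0 2) - 1*(u 1)*(Real.cos θ)*(B 2 0) + (u 1)*(Real.cos θ)*(B 0 2) - 1*(u 0)*(B 2 1) + (u 0)*(B 1 2) + (u 0)*(Real.cos θ)*(B 2 1) - 1*(u 0)*(Real.cos θ)*(B 1 2)) * hu'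
theorem lyapunov_decrease_basic
    (A : M3) (hA : A.PosDef) (u : V3) (hu : u ⬝ᵥ u = 1)
    (γ kR kω kθ : ℝ) (hγ : 0 < γ) (hkR : 0 < kR) (hkω : 0 < kω) (hkθ : 0 < kθ)
    (J : M3) (hJ : J.PosDef)
    (R : ℝ → M3) (θ : ℝ → ℝ) (ω : ℝ → V3) (t₀ : ℝ)
    (Sm : M3) (hSm : Smᵀ = -Sm)
    (psi0 : V3) (hpsi0 : psi0 = psi (A * Tmap u (R t₀) (θ t₀)))
    (hR : HasDerivAt R (R t₀ * skew (ω t₀)) t₀)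
    (hθ : HasDerivAt θ (-(kθ * (γ * θ t₀ + 2 * (u ⬝ᵥ psi0)))) t₀)
    (hω : HasDerivAt ω
      (J⁻¹ *ᵥ (Sm *ᵥ ω t₀ - (2 * kR) • (Ra (θ t₀) u *ᵥ psi0) - kω • ω t₀)) t₀) :
    HasDerivAt (fun t => kR * Ufun A u γ (R t) (θ t) + 1 / 2 * (ω t ⬝ᵥ J *ᵥ ω t))
      (-(kω * (ω t₀ ⬝ᵥ ω t₀)) - kR * kθ * (γ * θ t₀ + 2 * (u ⬝ᵥ psi0)) ^ 2) t₀ := by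
  have hβ : (fun t => kR * Ufun A u γ (R t) (θ t) + 1 / 2 * (ω t ⬝ᵥ J *ᵥ ω t))
      = (fun t => kR * ((A.trace - (A * (R t * Ra (θ t) u)).trace) + γ / 2 * θ t ^ 2)
          + 1 / 2 * (ω t ⬝ᵥ J *ᵥ ω t)) := by
    funext t
    rw [Ufun, Tmap, Matrix.mul_sub, Matrix.mul_one, Matrix.trace_sub]
  rw [hβ]
  -- abbreviations
  set θd : ℝ := -(kθ * (γ * θ t₀ + 2 * (u ⬝ᵥ psi0))) with hθd
  set v : V3 := Sm *ᵥ ω t₀ - (2 * kR) • (Ra (θ t₀) u *ᵥ psi0) - kω • ω t₀ with hv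
  set S : M3 := skew u with hSdef
  set Q : M3 := Ra (θ t₀) u with hQdef
  set Qd : M3 := θd • (Real.cos (θ t₀) • S + Real.sin (θ t₀) • (S * S)) with hQddef
  -- derivative of Rodrigues part
  have hQd : HasDerivAt (fun t => Ra (θ t) u) Qd t₀ := by
    have h1 : HasDerivAt (fun t => Real.sin (θ t) • S) ((Real.cos (θ t₀) * θd) • S) t₀ :=
      (hθ.sin).smul_const S
    have h2 : HasDerivAt (fun t => (1 - Real.cos (θ t)) • (S * S))
        ((0 - -Real.sin (θ t₀) * θd) • (S * S)) t₀ :=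
      (((hasDerivAt_const t₀ (1 : ℝ)).sub hθ.cos)).smul_const (S * S)
    have h := ((hasDerivAt_const t₀ (1 : M3)).fun_add h1).fun_add h2
    have hfn : (fun t => (1 : M3) + Real.sin (θ t) • S + (1 - Real.cos (θ t)) • (S * S))
        = fun t => Ra (θ t) u := by
      funext t; rw [Ra, hSdef]
    rw [hfn] at h
    have e : Qd = (0 : M3) + (Real.cos (θ t₀) * θd) • S + (0 - -Real.sin (θ t₀) * θd) • (S * S) := by
      rw [hQddef]; module
    rw [e]; exact h
  have hT : HasDerivAt (fun t => R t * Ra (θ t) u)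
      (R t₀ * skew (ω t₀) * Q + R t₀ * Qd) t₀ := hR.matmul hQd
  have hAT : HasDerivAt (fun t => A * (R t * Ra (θ t) u))
      (A * (R t₀ * skew (ω t₀) * Q + R t₀ * Qd)) t₀ := by
    have := (hasDerivAt_const t₀ A).matmul hT
    simpa using this
  have htr := hAT.mtrace
  -- derivative of the kinetic part
  have hJdet : IsUnit J.det := hJ.det_pos.ne'.isUnit
  have hJsym : Jᵀ = J := by
    have := hJ.1
    simpa [Matrix.IsHermitian] using this
  have hJv : J *ᵥ (J⁻¹ *ᵥ v) = v := by
    rw [Matrix.mulVec_mulVec, Matrix.mul_nonsing_inv _ hJdet, Matrix.one_mulVec]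
  have hdot : HasDerivAt (fun t => ω t ⬝ᵥ J *ᵥ ω t)
      ((J⁻¹ *ᵥ v) ⬝ᵥ J *ᵥ ω t₀ + ω t₀ ⬝ᵥ J *ᵥ (J⁻¹ *ᵥ v)) t₀ :=
    hω.dotp hω.mulVecConst
  -- assemble
  have hP1 : HasDerivAt (fun t => A.trace - (A * (R t * Ra (θ t) u)).trace)
      (0 - (A * (R t₀ * skew (ω t₀) * Q + R t₀ * Qd)).trace) t₀ :=
    (hasDerivAt_const t₀ A.trace).sub htr
  have hP2 : HasDerivAt (fun t => γ / 2 * θ t ^ 2) (γ / 2 * (2 * θ t₀ ^ 1 * θd)) t₀ :=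
    (hθ.pow 2).const_mul (γ / 2)
  have hsum := ((hP1.fun_add hP2).const_mul kR).fun_add (hdot.const_mul (1 / 2))
  convert hsum using 1
  any_goals rfl
  -- now a scalar identity
  have hpsi0' : psi0 = psi (A * R t₀ * Q) := by rw [hpsi0, Tmap, Matrix.mul_assoc, hQdef]
  have ht2 : (A * R t₀ * skew (ω t₀) * Q).trace = -2 * (ω t₀ ⬝ᵥ Q *ᵥ psi0) := by
    rw [hpsi0', hQdef]; exact key1 (A * R t₀) (ω t₀) u (θ t₀) hu
  have ht3 : ((A * R t₀) * (Real.cos (θ t₀) • S + Real.sin (θ t₀) • (S * S))).trace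
      = -2 * (u ⬝ᵥ psi0) := by
    rw [hpsi0', hSdef, hQdef]; exact key2 (A * R t₀) u (θ t₀) hu
  have assoc1 : A * (R t₀ * skew (ω t₀) * Q) = A * R t₀ * skew (ω t₀) * Q := by
    rw [← Matrix.mul_assoc, ← Matrix.mul_assoc]
  have hsnd : (A * (R t₀ * Qd)).trace = θd * (-2 * (u ⬝ᵥ psi0)) := by
    rw [hQddef, Matrix.mul_smul, Matrix.mul_smul, Matrix.trace_smul, smul_eq_mul,
      ← Matrix.mul_assoc, ht3]
  have hF1 : (A * (R t₀ * skew (ω t₀) * Q + R t₀ * Qd)).trace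
      = -2 * (ω t₀ ⬝ᵥ Q *ᵥ psi0) + θd * (-2 * (u ⬝ᵥ psi0)) := by
    rw [Matrix.mul_add, Matrix.trace_add, assoc1, ht2, hsnd]
  have hskew0 : ω t₀ ⬝ᵥ Sm *ᵥ ω t₀ = 0 := by
    have h1 : ω t₀ ⬝ᵥ Sm *ᵥ ω t₀ = (Smᵀ *ᵥ ω t₀) ⬝ᵥ ω t₀ := by
      rw [Matrix.dotProduct_mulVec, Matrix.mulVec_transpose]
    rw [hSm, Matrix.neg_mulVec, neg_dotProduct, dotProduct_comm] at h1
    rw [dotProduct_comm]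
    linarith
  have hF3 : ω t₀ ⬝ᵥ v = -(2 * kR) * (ω t₀ ⬝ᵥ Q *ᵥ psi0) - kω * (ω t₀ ⬝ᵥ ω t₀) := by
    rw [hv, dotProduct_sub, dotProduct_sub, dotProduct_smul,
      dotProduct_smul, hskew0, hQdef, smul_eq_mul, smul_eq_mul]
    ring
  have hF2 : (J⁻¹ *ᵥ v) ⬝ᵥ J *ᵥ ω t₀ = ω t₀ ⬝ᵥ v := by
    rw [Matrix.dotProduct_mulVec, ← Matrix.mulVec_transpose, hJsym, dotProduct_comm, hJv]
  have hF2' : ω t₀ ⬝ᵥ J *ᵥ (J⁻¹ *ᵥ v) = ω t₀ ⬝ᵥ v := by rw [hJv]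
  rw [hF1, hF2, hF2', hF3, hθd]
  ring
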